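/- If ρ ≤ Cσ for positive-definite density operators ρ, σ and constant C > 0, then for all matrices X: ⟨X, (J_ρ^{BKM})^{-1}X⟩ ≤ C⟨X, (J_σ^{BKM})^{-1}X⟩, where (J_τ^{BKM})^{-1}(X) = ∫₀¹ τ^t X τ^{1−t} dt. -/

import Mathlib

set_option maxHeartbeats 1000000

open scoped Matrix ComplexOrder

/-- The real power `ρ^t` of the positive matrix `ρ = U diag(λ) Uᴴ`, defined via
the spectral decomposition. -/
noncomputable def matRpow {d : ℕ} (U : Matrix (Fin d) (Fin d) ℂ)
    (lam : Fin d → ℝ) (t : ℝ) : Matrix (Fin d) (Fin d) ℂ :=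
  U * Matrix.diagonal (fun i => ((lam i ^ t : ℝ) : ℂ)) * Uᴴ

namespace Stmt17Aux

open MeasureTheory Matrix Set

variable {d : ℕ}

noncomputable def Ifun (t : ℝ) : ℝ := ∫ s in Ioi (0:ℝ), s ^ (t-1) * (1 / (1 + s))

lemma contOn_g {t a : ℝ} (ha : 0 < a) :
    ContinuousOn (fun s : ℝ => s ^ (t-1) * (a / (a + s))) (Ioi (0:ℝ)) := by
  apply ContinuousOn.mul
  · intro s hs
    exact (Real.continuousAt_rpow_const s (t-1) (Or.inl (ne_of_gt hs))).continuousWithinAt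
  · apply ContinuousOn.div continuousOn_const (continuousOn_const.add continuousOn_id)
    intro s hs
    have : (0:ℝ) < s := hs
    exact (add_pos ha this).ne'

lemma integrableOn_g {t a : ℝ} (ht0 : 0 < t) (ht1 : t < 1) (ha : 0 < a) :
    IntegrableOn (fun s => s ^ (t-1) * (a / (a + s))) (Ioi (0:ℝ)) := by
  have hmeas : AEStronglyMeasurable (fun s : ℝ => s ^ (t-1) * (a / (a + s)))
      (volume.restrict (Ioi (0:ℝ))) :=
    (contOn_g ha).aestronglyMeasurable measurableSet_Ioi
  rw [← Ioc_union_Ioi_eq_Ioi (le_of_lt one_pos)]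
  apply IntegrableOn.union
  · -- on (0,1]: dominate by s^(t-1)
    have hmaj : IntegrableOn (fun s : ℝ => s ^ (t-1)) (Ioc (0:ℝ) 1) := by
      have := (intervalIntegral.intervalIntegrable_rpow' (a := 0) (b := 1) (by linarith : (-1:ℝ) < t-1))
      rwa [intervalIntegrable_iff, uIoc_of_le (by norm_num : (0:ℝ) ≤ 1)] at this
    apply Integrable.mono hmaj (hmeas.mono_set Ioc_subset_Ioi_self)
    rw [ae_restrict_iff' measurableSet_Ioc]
    filter_upwards with s hs
    have hs0 : 0 < s := hs.1
    have h1 : 0 < a + s := by linarith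
    have h2 : a / (a + s) ≤ 1 := by
      rw [div_le_one h1]; linarith
    have h3 : (0:ℝ) ≤ s ^ (t-1) := Real.rpow_nonneg hs0.le _
    rw [Real.norm_eq_abs, Real.norm_eq_abs, abs_of_nonneg h3,
      abs_of_nonneg (by positivity : (0:ℝ) ≤ s ^ (t-1) * (a / (a+s)))]
    calc s ^ (t-1) * (a / (a+s)) ≤ s ^ (t-1) * 1 := by
          apply mul_le_mul_of_nonneg_left h2 h3
      _ = s ^ (t-1) := mul_one _
  · -- on (1,∞): dominate by a * s^(t-2)
    have hmaj : IntegrableOn (fun s : ℝ => a * s ^ (t-2)) (Ioi (1:ℝ)) :=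
      (integrableOn_Ioi_rpow_of_lt (by linarith : t-2 < -1) one_pos).const_mul a
    apply Integrable.mono hmaj (hmeas.mono_set (Ioi_subset_Ioi (le_of_lt one_pos)))
    rw [ae_restrict_iff' measurableSet_Ioi]
    filter_upwards with s hs
    have hs1 : (1:ℝ) < s := hs
    have hs0 : (0:ℝ) < s := lt_trans one_pos hs1
    have h1 : 0 < a + s := by linarith
    rw [Real.norm_eq_abs, Real.norm_eq_abs,
      abs_of_nonneg (by positivity : (0:ℝ) ≤ s ^ (t-1) * (a / (a+s))),
      abs_of_nonneg (by positivity : (0:ℝ) ≤ a * s ^ (t-2))]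
    have h2 : a / (a + s) ≤ a / s := by
      apply div_le_div_of_nonneg_left ha.le hs0
      linarith
    calc s ^ (t-1) * (a / (a+s)) ≤ s ^ (t-1) * (a / s) :=
          mul_le_mul_of_nonneg_left h2 (Real.rpow_nonneg hs0.le _)
      _ = a * s ^ (t-2) := by
          rw [div_eq_mul_inv, ← Real.rpow_neg_one s]
          have hss : s ^ (t-1) * s ^ (-1:ℝ) = s ^ (t-2) := by
            rw [← Real.rpow_add hs0]; congr 1; ring
          rw [← hss]; ring

lemma integral_g {t a : ℝ} (ht0 : 0 < t) (ht1 : t < 1) (ha : 0 < a) :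
    ∫ s in Ioi (0:ℝ), s ^ (t-1) * (a / (a + s)) = a ^ t * Ifun t := by
  have h := integral_comp_mul_left_Ioi (fun s => s ^ (t-1) * (a / (a + s))) 0 ha
  rw [mul_zero] at h
  have h2 : ∫ x in Ioi (0:ℝ), (a * x) ^ (t-1) * (a / (a + a * x))
      = a ^ (t-1) * Ifun t := by
    rw [show (a ^ (t-1) * Ifun t) = ∫ x in Ioi (0:ℝ), a ^ (t-1) * (x ^ (t-1) * (1 / (1 + x)))
      from (integral_const_mul _ _).symm]
    apply setIntegral_congr_fun measurableSet_Ioi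
    intro x hx
    have hx0 : (0:ℝ) < x := hx
    simp only
    rw [Real.mul_rpow ha.le hx0.le]
    have : a / (a + a * x) = 1 / (1 + x) := by
      rw [show a + a * x = a * (1 + x) by ring]
      rw [div_eq_div_iff (by positivity) (by positivity)]
      ring
    rw [this]
    ring
  rw [h2] at h
  have ha' : a ^ (t-1) * Ifun t = a⁻¹ * ∫ s in Ioi (0:ℝ), s ^ (t-1) * (a / (a + s)) := by
    rw [h]; simp [smul_eq_mul]
  have : ∫ s in Ioi (0:ℝ), s ^ (t-1) * (a / (a + s)) = a * (a ^ (t-1) * Ifun t) := by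
    rw [ha']
    field_simp
    congr 1; funext s; ring
  rw [this, ← mul_assoc]
  congr 1
  rw [show a * a ^ (t-1) = a ^ (1:ℝ) * a ^ (t-1) by rw [Real.rpow_one],
    ← Real.rpow_add ha]
  congr 1
  ring

lemma Ifun_pos {t : ℝ} (ht0 : 0 < t) (ht1 : t < 1) : 0 < Ifun t := by
  unfold Ifun
  rw [setIntegral_pos_iff_support_of_nonneg_ae]
  · have hsub : Ioi (0:ℝ) ⊆ Function.support (fun s : ℝ => s ^ (t-1) * (1 / (1 + s))) := by
      intro x hx
      have hx0 : (0:ℝ) < x := hx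
      have : (0:ℝ) < x ^ (t-1) * (1 / (1 + x)) := by positivity
      exact ne_of_gt this
    have : Ioi (0:ℝ) ⊆ Function.support (fun s : ℝ => s ^ (t-1) * (1 / (1 + s))) ∩ Ioi 0 :=
      fun x hx => ⟨hsub hx, hx⟩
    calc (0:ENNReal) < volume (Ioi (0:ℝ)) := by rw [Real.volume_Ioi]; exact ENNReal.zero_lt_top
      _ ≤ _ := measure_mono this
  · filter_upwards [ae_restrict_mem measurableSet_Ioi] with s hs
    have hs0 : (0:ℝ) < s := hs
    simp only [Pi.zero_apply]
    positivity
  · exact integrableOn_g ht0 ht1 one_pos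

lemma qf_eq (U : Matrix (Fin d) (Fin d) ℂ) (f : Fin d → ℝ) (v : Fin d → ℂ) :
    star v ⬝ᵥ (U * Matrix.diagonal (fun i => (f i : ℂ)) * Uᴴ) *ᵥ v
      = ((∑ k, f k * Complex.normSq ((Uᴴ *ᵥ v) k) : ℝ) : ℂ) := by
  have h1 : (U * Matrix.diagonal (fun i => (f i : ℂ)) * Uᴴ) *ᵥ v
      = U *ᵥ (Matrix.diagonal (fun i => (f i : ℂ)) *ᵥ (Uᴴ *ᵥ v)) := by
    simp [Matrix.mulVec_mulVec, Matrix.mul_assoc]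
  rw [h1, Matrix.dotProduct_mulVec]
  have h2 : star v ᵥ* U = star (Uᴴ *ᵥ v) := by
    rw [Matrix.star_mulVec, Matrix.conjTranspose_conjTranspose]
  rw [h2]
  push_cast
  simp only [dotProduct, Matrix.mulVec_diagonal, Pi.star_apply]
  congr 1
  funext k
  rw [Complex.normSq_eq_conj_mul_self]
  simp only [Complex.star_def]
  ring

lemma sum_normSq_eq (U : Matrix (Fin d) (Fin d) ℂ) (hU : Uᴴ * U = 1) (v : Fin d → ℂ) :
    ∑ k, Complex.normSq ((Uᴴ *ᵥ v) k) = ∑ k, Complex.normSq (v k) := by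
  have h1 := qf_eq U (fun _ => 1) v
  have hUU : U * Uᴴ = 1 := mul_eq_one_comm.mp hU
  have h2 : (U * Matrix.diagonal (fun _ : Fin d => ((1:ℝ) : ℂ)) * Uᴴ) = 1 := by
    simpa using hUU
  rw [h2] at h1
  have h3 : star v ⬝ᵥ (1 : Matrix (Fin d) (Fin d) ℂ) *ᵥ v
      = ((∑ k, Complex.normSq (v k) : ℝ) : ℂ) := by
    push_cast
    simp only [Matrix.one_mulVec, dotProduct, Pi.star_apply]
    congr 1
    funext k
    rw [Complex.normSq_eq_conj_mul_self]
    simp [Complex.star_def]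
  rw [h3] at h1
  have h4 := Complex.ofReal_inj.mp h1
  simpa using h4.symm

lemma matRpow_isHermitian (U : Matrix (Fin d) (Fin d) ℂ) (lam : Fin d → ℝ) (t : ℝ) :
    (matRpow U lam t).IsHermitian := by
  unfold matRpow
  exact Matrix.isHermitian_mul_mul_conjTranspose U
    (Matrix.isHermitian_diagonal_of_self_adjoint _
      (by funext i; simp [Complex.star_def, Complex.conj_ofReal]))

lemma matRpow_posSemidef (U : Matrix (Fin d) (Fin d) ℂ) (lam : Fin d → ℝ)
    (hlam : ∀ i, 0 < lam i) (t : ℝ) : (matRpow U lam t).PosSemidef := by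
  unfold matRpow
  exact (Matrix.posSemidef_diagonal_iff.mpr fun i =>
    Complex.zero_le_real.mpr (Real.rpow_nonneg (hlam i).le t)).mul_mul_conjTranspose_same U

open scoped MatrixOrder in
lemma trace_key {Q P X : Matrix (Fin d) (Fin d) ℂ} (hQ : Q.PosSemidef) (hP : P.PosSemidef) :
    0 ≤ (Xᴴ * Q * X * P).trace := by
  classical
  have hS : CFC.sqrt P * CFC.sqrt P = P := CFC.sqrt_mul_sqrt_self P hP.nonneg
  have hSh : (CFC.sqrt P).IsHermitian := (CFC.sqrt_nonneg P).posSemidef.isHermitian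
  have h1 : (Xᴴ * Q * X * CFC.sqrt P) * CFC.sqrt P = Xᴴ * Q * X * P := by
    rw [Matrix.mul_assoc (Xᴴ * Q * X), hS]
  rw [← h1, Matrix.trace_mul_comm]
  have h2 : CFC.sqrt P * (Xᴴ * Q * X * CFC.sqrt P) = (X * CFC.sqrt P)ᴴ * Q * (X * CFC.sqrt P) := by
    rw [Matrix.conjTranspose_mul, hSh.eq]
    noncomm_ring
  rw [h2]
  have h3 := hQ.conjTranspose_mul_mul_same (X * CFC.sqrt P)
  -- trace of PSD is nonneg
  rw [Matrix.trace]
  apply Finset.sum_nonneg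
  intro i _
  have h4 := h3.dotProduct_mulVec_nonneg (Pi.single i 1)
  have h5 : star (Pi.single i 1 : Fin d → ℂ) = (Pi.single i 1 : Fin d → ℂ) := by
    funext j
    by_cases h : j = i <;> simp [Pi.single_apply, h]
  rw [h5, Matrix.mulVec_single, single_dotProduct] at h4
  simpa using h4

lemma matRpow_smul (U : Matrix (Fin d) (Fin d) ℂ) (lam : Fin d → ℝ)
    (hlam : ∀ i, 0 ≤ lam i) {C : ℝ} (hC : 0 ≤ C) (t : ℝ) :
    matRpow U (fun i => C * lam i) t = ((C ^ t : ℝ) : ℂ) • matRpow U lam t := by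
  have hfun : (fun i => (((C * lam i) ^ t : ℝ) : ℂ))
      = ((C ^ t : ℝ) : ℂ) • (fun i => ((lam i ^ t : ℝ) : ℂ)) := by
    funext i
    rw [Pi.smul_apply, Real.mul_rpow hC (hlam i)]
    push_cast
    simp [smul_eq_mul]
  unfold matRpow
  rw [hfun, Matrix.diagonal_smul, Matrix.mul_smul, Matrix.smul_mul]

lemma cont_integrand (U : Matrix (Fin d) (Fin d) ℂ) (lam : Fin d → ℝ)
    (hlam : ∀ i, 0 < lam i) (X : Matrix (Fin d) (Fin d) ℂ) :
    Continuous fun t : ℝ =>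
      (Matrix.trace (Xᴴ * matRpow U lam t * X * matRpow U lam (1 - t))).re := by
  have hm : ∀ g : ℝ → ℝ, Continuous g → Continuous fun t : ℝ => matRpow U lam (g t) := by
    intro g hg
    unfold matRpow
    apply Continuous.matrix_mul (Continuous.matrix_mul continuous_const ?_) continuous_const
    apply Continuous.matrix_diagonal
    have : Continuous fun t : ℝ => fun i : Fin d => ((lam i ^ g t : ℝ) : ℂ) := by
      apply continuous_pi
      intro i
      have h0 : Continuous fun t : ℝ => (lam i : ℝ) ^ t := by
        have : (fun t : ℝ => (lam i : ℝ) ^ t) = fun t => Real.exp (Real.log (lam i) * t) := by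
          funext t
          rw [Real.rpow_def_of_pos (hlam i)]
        rw [this]
        exact Real.continuous_exp.comp (continuous_const.mul continuous_id)
      exact Complex.continuous_ofReal.comp (h0.comp hg)
    exact this
  apply Complex.continuous_re.comp
  apply Continuous.matrix_trace
  exact Continuous.matrix_mul
    (Continuous.matrix_mul (Continuous.matrix_mul continuous_const (hm _ continuous_id))
      continuous_const) (hm _ (continuous_const.sub continuous_id))

lemma sandwich (U : Matrix (Fin d) (Fin d) ℂ) (hU : Uᴴ * U = 1) (f g : Fin d → ℂ) :
    (U * Matrix.diagonal f * Uᴴ) * (U * Matrix.diagonal g * Uᴴ)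
      = U * Matrix.diagonal (f * g) * Uᴴ := by
  have h : (U * Matrix.diagonal f * Uᴴ) * (U * Matrix.diagonal g * Uᴴ)
      = U * (Matrix.diagonal f * ((Uᴴ * U) * (Matrix.diagonal g * Uᴴ))) := by
    simp only [Matrix.mul_assoc]
  rw [h, hU, Matrix.one_mul, ← Matrix.mul_assoc (Matrix.diagonal f),
    Matrix.diagonal_mul_diagonal]
  simp only [Matrix.mul_assoc]
  rfl

lemma conjdiag_herm (U : Matrix (Fin d) (Fin d) ℂ) (f : Fin d → ℝ) :
    (U * Matrix.diagonal (fun i => (f i : ℂ)) * Uᴴ).IsHermitian :=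
  Matrix.isHermitian_mul_mul_conjTranspose U
    (Matrix.isHermitian_diagonal_of_self_adjoint _
      (by funext i; simp [Complex.star_def, Complex.conj_ofReal]))

lemma conjdiag_psd (U : Matrix (Fin d) (Fin d) ℂ) (f : Fin d → ℝ) (hf : ∀ i, 0 ≤ f i) :
    (U * Matrix.diagonal (fun i => (f i : ℂ)) * Uᴴ).PosSemidef :=
  (Matrix.posSemidef_diagonal_iff.mpr fun i =>
    Complex.zero_le_real.mpr (hf i)).mul_mul_conjTranspose_same U

lemma resolvent_antitone (U V : Matrix (Fin d) (Fin d) ℂ) (a b : Fin d → ℝ)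
    (hU : Uᴴ * U = 1) (hV : Vᴴ * V = 1) (ha : ∀ i, 0 < a i) (hb : ∀ i, 0 < b i)
    (hAB : (V * Matrix.diagonal (fun i => (b i : ℂ)) * Vᴴ
            - U * Matrix.diagonal (fun i => (a i : ℂ)) * Uᴴ).PosSemidef)
    (v : Fin d → ℂ) {s : ℝ} (hs : 0 < s) :
    ∑ k, (1 / (b k + s)) * Complex.normSq ((Vᴴ *ᵥ v) k)
      ≤ ∑ k, (1 / (a k + s)) * Complex.normSq ((Uᴴ *ᵥ v) k) := by
  classical
  set NA := U * Matrix.diagonal (fun k => ((1 / (a k + s) : ℝ) : ℂ)) * Uᴴ with hNA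
  set NB := V * Matrix.diagonal (fun k => ((1 / (b k + s) : ℝ) : ℂ)) * Vᴴ with hNB
  set PA := U * Matrix.diagonal (fun k => ((a k + s : ℝ) : ℂ)) * Uᴴ with hPA
  set PB := V * Matrix.diagonal (fun k => ((b k + s : ℝ) : ℂ)) * Vᴴ with hPB
  have has : ∀ k, (0:ℝ) < a k + s := fun k => by have := ha k; linarith
  have hbs : ∀ k, (0:ℝ) < b k + s := fun k => by have := hb k; linarith
  have hPANA : PA * NA = 1 := by
    rw [hPA, hNA, sandwich U hU]
    have : (fun k => ((a k + s : ℝ) : ℂ)) * (fun k => ((1 / (a k + s) : ℝ) : ℂ))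
        = fun _ => 1 := by
      funext k
      have h0 : ((a k : ℂ) + (s:ℂ)) ≠ 0 := by
        exact_mod_cast Complex.ofReal_ne_zero.mpr (has k).ne'
      push_cast [Pi.mul_apply]
      field_simp
    rw [this]
    have hUU : U * Uᴴ = 1 := mul_eq_one_comm.mp hU
    simpa using hUU
  have hPBNB : PB * NB = 1 := by
    rw [hPB, hNB, sandwich V hV]
    have : (fun k => ((b k + s : ℝ) : ℂ)) * (fun k => ((1 / (b k + s) : ℝ) : ℂ))
        = fun _ => 1 := by
      funext k
      have h0 : ((b k : ℂ) + (s:ℂ)) ≠ 0 := by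
        exact_mod_cast Complex.ofReal_ne_zero.mpr (hbs k).ne'
      push_cast [Pi.mul_apply]
      field_simp
    rw [this]
    have hVV : V * Vᴴ = 1 := mul_eq_one_comm.mp hV
    simpa using hVV
  have hermPA : PAᴴ = PA := (conjdiag_herm U _)
  have hermNB : NBᴴ = NB := (conjdiag_herm V _)
  have hPApsd : PA.PosSemidef := conjdiag_psd U _ (fun k => (has k).le)
  have hdiff : (PB - PA).PosSemidef := by
    have e1 : PB = V * Matrix.diagonal (fun i => (b i : ℂ)) * Vᴴ + (s:ℂ) • 1 := by
      have hd : Matrix.diagonal (fun k => ((b k + s : ℝ) : ℂ))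
          = Matrix.diagonal (fun i => (b i : ℂ)) + (s:ℂ) • (1 : Matrix (Fin d) (Fin d) ℂ) := by
        have h1 : ((s:ℂ) • (1 : Matrix (Fin d) (Fin d) ℂ)) = Matrix.diagonal (fun _ => (s:ℂ)) := by
          ext i j
          by_cases h : i = j <;>
            simp [Matrix.one_apply, Matrix.diagonal_apply, h]
        rw [h1, Matrix.diagonal_add]
        congr 1
        funext k
        push_cast
        ring
      rw [hPB, hd, Matrix.mul_add, Matrix.add_mul]
      congr 1
      rw [Matrix.mul_smul, Matrix.smul_mul, Matrix.mul_one, mul_eq_one_comm.mp hV]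
    have e2 : PA = U * Matrix.diagonal (fun i => (a i : ℂ)) * Uᴴ + (s:ℂ) • 1 := by
      have hd : Matrix.diagonal (fun k => ((a k + s : ℝ) : ℂ))
          = Matrix.diagonal (fun i => (a i : ℂ)) + (s:ℂ) • (1 : Matrix (Fin d) (Fin d) ℂ) := by
        have h1 : ((s:ℂ) • (1 : Matrix (Fin d) (Fin d) ℂ)) = Matrix.diagonal (fun _ => (s:ℂ)) := by
          ext i j
          by_cases h : i = j <;>
            simp [Matrix.one_apply, Matrix.diagonal_apply, h]
        rw [h1, Matrix.diagonal_add]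
        congr 1
        funext k
        push_cast
        ring
      rw [hPA, hd, Matrix.mul_add, Matrix.add_mul]
      congr 1
      rw [Matrix.mul_smul, Matrix.smul_mul, Matrix.mul_one, mul_eq_one_comm.mp hU]
    have : PB - PA = V * Matrix.diagonal (fun i => (b i : ℂ)) * Vᴴ
        - U * Matrix.diagonal (fun i => (a i : ℂ)) * Uᴴ := by
      rw [e1, e2]; abel
    rw [this]; exact hAB
  set z := NA *ᵥ v with hz
  set u := NB *ᵥ v with hu
  have hPAz : PA *ᵥ z = v := by
    rw [hz, Matrix.mulVec_mulVec, hPANA, Matrix.one_mulVec]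
  have hPBu : PB *ᵥ u = v := by
    rw [hu, Matrix.mulVec_mulVec, hPBNB, Matrix.one_mulVec]
  -- dot product identities
  have hvm : star z ᵥ* PA = star v := by
    rw [← hermPA, ← Matrix.star_mulVec, hPAz]
  have id1 : star z ⬝ᵥ v = star v ⬝ᵥ z := by
    conv_lhs => rw [← hPAz]
    rw [Matrix.dotProduct_mulVec, hvm]
  have id2 : star z ⬝ᵥ PA *ᵥ u = star v ⬝ᵥ u := by
    rw [Matrix.dotProduct_mulVec, hvm]
  have id3 : star u ⬝ᵥ v = star v ⬝ᵥ u := by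
    conv_lhs => rw [hu, Matrix.star_mulVec, hermNB, ← Matrix.dotProduct_mulVec, ← hu]
  have expand : star (z - u) ⬝ᵥ PA *ᵥ (z - u)
      = star v ⬝ᵥ z - star v ⬝ᵥ u - star v ⬝ᵥ u + star u ⬝ᵥ PA *ᵥ u := by
    rw [star_sub, Matrix.mulVec_sub, sub_dotProduct, dotProduct_sub,
      dotProduct_sub, hPAz, id1, id2, id3]
    ring
  have ineq1 : 0 ≤ star v ⬝ᵥ z - star v ⬝ᵥ u - star v ⬝ᵥ u + star u ⬝ᵥ PA *ᵥ u := by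
    rw [← expand]; exact hPApsd.dotProduct_mulVec_nonneg _
  have ineq2 : star u ⬝ᵥ PA *ᵥ u ≤ star v ⬝ᵥ u := by
    have h0 : 0 ≤ star u ⬝ᵥ (PB - PA) *ᵥ u := hdiff.dotProduct_mulVec_nonneg _
    rw [Matrix.sub_mulVec, dotProduct_sub, hPBu, id3] at h0
    exact sub_nonneg.mp h0
  have final : star v ⬝ᵥ u ≤ star v ⬝ᵥ z := by
    have h1 : (0:ℂ) ≤ star v ⬝ᵥ z - star v ⬝ᵥ u - star v ⬝ᵥ u + star v ⬝ᵥ u := by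
      calc (0:ℂ) ≤ star v ⬝ᵥ z - star v ⬝ᵥ u - star v ⬝ᵥ u + star u ⬝ᵥ PA *ᵥ u := ineq1
        _ ≤ _ := by exact add_le_add le_rfl ineq2
    have h2 : (0:ℂ) ≤ star v ⬝ᵥ z - star v ⬝ᵥ u := by
      convert h1 using 1; ring
    exact sub_nonneg.mp h2
  rw [hz, hu, hNA, hNB] at final
  rw [qf_eq U _ v, qf_eq V _ v] at final
  exact_mod_cast final

lemma LH_sum (U V : Matrix (Fin d) (Fin d) ℂ) (a b : Fin d → ℝ)
    (hU : Uᴴ * U = 1) (hV : Vᴴ * V = 1) (ha : ∀ i, 0 < a i) (hb : ∀ i, 0 < b i)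
    (hAB : (V * Matrix.diagonal (fun i => (b i : ℂ)) * Vᴴ
            - U * Matrix.diagonal (fun i => (a i : ℂ)) * Uᴴ).PosSemidef)
    (v : Fin d → ℂ) {t : ℝ} (ht0 : 0 ≤ t) (ht1 : t ≤ 1) :
    ∑ k, a k ^ t * Complex.normSq ((Uᴴ *ᵥ v) k)
      ≤ ∑ k, b k ^ t * Complex.normSq ((Vᴴ *ᵥ v) k) := by
  set wa : Fin d → ℝ := fun k => Complex.normSq ((Uᴴ *ᵥ v) k) with hwa
  set wb : Fin d → ℝ := fun k => Complex.normSq ((Vᴴ *ᵥ v) k) with hwb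
  rcases ht0.eq_or_lt with h0 | h0
  · -- t = 0
    apply le_of_eq
    simp only [← h0, Real.rpow_zero, one_mul]
    rw [sum_normSq_eq U hU v, sum_normSq_eq V hV v]
  rcases ht1.eq_or_lt with h1 | h1
  · -- t = 1
    subst h1
    simp only [Real.rpow_one]
    have h2 := hAB.dotProduct_mulVec_nonneg v
    rw [Matrix.sub_mulVec, dotProduct_sub, sub_nonneg, qf_eq U _ v, qf_eq V _ v] at h2
    exact_mod_cast h2
  -- 0 < t < 1
  have hsum : ∑ k, wa k = ∑ k, wb k := by
    rw [hwa, hwb, sum_normSq_eq U hU v, sum_normSq_eq V hV v]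
  set Fa : ℝ → ℝ := fun s => ∑ k, wa k * (s ^ (t-1) * (a k / (a k + s))) with hFa
  set Fb : ℝ → ℝ := fun s => ∑ k, wb k * (s ^ (t-1) * (b k / (b k + s))) with hFb
  have hwanneg : ∀ k, 0 ≤ wa k := fun k => Complex.normSq_nonneg _
  have hwbnneg : ∀ k, 0 ≤ wb k := fun k => Complex.normSq_nonneg _
  have hkey : ∀ s ∈ Ioi (0:ℝ), Fa s ≤ Fb s := by
    intro s hs
    have hs0 : (0:ℝ) < s := hs
    have hexp : ∀ (c : Fin d → ℝ) (hc : ∀ i, 0 < c i) (w : Fin d → ℝ),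
        ∑ k, w k * (s ^ (t-1) * (c k / (c k + s)))
          = s ^ (t-1) * ((∑ k, w k) - s * ∑ k, (1 / (c k + s)) * w k) := by
      intro c hc w
      calc ∑ k, w k * (s ^ (t-1) * (c k / (c k + s)))
          = ∑ k, (s ^ (t-1) * w k - s ^ (t-1) * (s * ((1 / (c k + s)) * w k))) := by
            apply Finset.sum_congr rfl
            intro k _
            have hcs : c k + s ≠ 0 := by have := hc k; positivity
            field_simp
            ring
        _ = s ^ (t-1) * ((∑ k, w k) - s * ∑ k, (1 / (c k + s)) * w k) := by
            rw [Finset.sum_sub_distrib, ← Finset.mul_sum, ← Finset.mul_sum, ← Finset.mul_sum,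
              ← mul_sub]
    simp only [hFa, hFb]
    rw [hexp a ha wa, hexp b hb wb, hsum]
    apply mul_le_mul_of_nonneg_left _ (Real.rpow_nonneg hs0.le _)
    apply sub_le_sub_left
    apply mul_le_mul_of_nonneg_left _ hs0.le
    exact resolvent_antitone U V a b hU hV ha hb hAB v hs0
  have hIa : IntegrableOn Fa (Ioi (0:ℝ)) := by
    rw [hFa]
    apply integrable_finset_sum
    intro k _
    exact (integrableOn_g h0 h1 (ha k)).const_mul (wa k)
  have hIb : IntegrableOn Fb (Ioi (0:ℝ)) := by
    rw [hFb]
    apply integrable_finset_sum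
    intro k _
    exact (integrableOn_g h0 h1 (hb k)).const_mul (wb k)
  have hle : ∫ s in Ioi (0:ℝ), Fa s ≤ ∫ s in Ioi (0:ℝ), Fb s :=
    setIntegral_mono_on hIa hIb measurableSet_Ioi hkey
  have hva : ∫ s in Ioi (0:ℝ), Fa s = (∑ k, a k ^ t * wa k) * Ifun t := by
    rw [hFa, integral_finset_sum _ (fun k _ => (integrableOn_g h0 h1 (ha k)).const_mul (wa k))]
    rw [Finset.sum_mul]
    apply Finset.sum_congr rfl
    intro k _
    rw [integral_const_mul, integral_g h0 h1 (ha k)]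
    ring
  have hvb : ∫ s in Ioi (0:ℝ), Fb s = (∑ k, b k ^ t * wb k) * Ifun t := by
    rw [hFb, integral_finset_sum _ (fun k _ => (integrableOn_g h0 h1 (hb k)).const_mul (wb k))]
    rw [Finset.sum_mul]
    apply Finset.sum_congr rfl
    intro k _
    rw [integral_const_mul, integral_g h0 h1 (hb k)]
    ring
  rw [hva, hvb] at hle
  exact le_of_mul_le_mul_right hle (Ifun_pos h0 h1)

lemma LH (U V : Matrix (Fin d) (Fin d) ℂ) (a b : Fin d → ℝ)
    (hU : Uᴴ * U = 1) (hV : Vᴴ * V = 1) (ha : ∀ i, 0 < a i) (hb : ∀ i, 0 < b i)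
    (hAB : (V * Matrix.diagonal (fun i => (b i : ℂ)) * Vᴴ
            - U * Matrix.diagonal (fun i => (a i : ℂ)) * Uᴴ).PosSemidef)
    {t : ℝ} (ht0 : 0 ≤ t) (ht1 : t ≤ 1) :
    (matRpow V b t - matRpow U a t).PosSemidef := by
  refine Matrix.PosSemidef.of_dotProduct_mulVec_nonneg ?_ ?_
  · exact (matRpow_isHermitian V b t).sub (matRpow_isHermitian U a t)
  · intro x
    rw [Matrix.sub_mulVec, dotProduct_sub, sub_nonneg]
    unfold matRpow
    rw [qf_eq U _ x, qf_eq V _ x]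
    exact_mod_cast LH_sum U V a b hU hV ha hb hAB x ht0 ht1

end Stmt17Aux

/-- if `ρ ≤ Cσ` for positive-definite density operators `ρ`, `σ`
(with spectral decompositions `ρ = Uρ diag(λρ) Uρᴴ`, `σ = Uσ diag(λσ) Uσᴴ`) and
`C > 0`, then for all matrices `X`,
`⟨X, (J_ρ^{BKM})⁻¹X⟩ ≤ C ⟨X, (J_σ^{BKM})⁻¹X⟩`, i.e.
`∫₀¹ tr(Xᴴ ρ^t X ρ^{1−t}) dt ≤ C ∫₀¹ tr(Xᴴ σ^t X σ^{1−t}) dt`. -/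
theorem stmt17 {d : ℕ} (ρ σ : Matrix (Fin d) (Fin d) ℂ) (C : ℝ) (hC : 0 < C)
    (hρ : ρ.PosDef) (hρtr : ρ.trace = 1)
    (hσ : σ.PosDef) (hσtr : σ.trace = 1)
    (hle : ((C : ℂ) • σ - ρ).PosSemidef)
    (Uρ Uσ : Matrix (Fin d) (Fin d) ℂ) (lamρ lamσ : Fin d → ℝ)
    (hUρ : Uρᴴ * Uρ = 1) (hlamρ : ∀ i, 0 < lamρ i)
    (hspecρ : ρ = Uρ * Matrix.diagonal (fun i => (lamρ i : ℂ)) * Uρᴴ)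
    (hUσ : Uσᴴ * Uσ = 1) (hlamσ : ∀ i, 0 < lamσ i)
    (hspecσ : σ = Uσ * Matrix.diagonal (fun i => (lamσ i : ℂ)) * Uσᴴ)
    (X : Matrix (Fin d) (Fin d) ℂ) :
    (∫ t in (0:ℝ)..1,
        (Matrix.trace (Xᴴ * matRpow Uρ lamρ t * X * matRpow Uρ lamρ (1 - t))).re)
      ≤ C * ∫ t in (0:ℝ)..1,
        (Matrix.trace (Xᴴ * matRpow Uσ lamσ t * X * matRpow Uσ lamσ (1 - t))).re := by
  classical
  open Stmt17Aux in
  -- the scaled eigenvalues of Cσ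
  set b : Fin d → ℝ := fun i => C * lamσ i with hbdef
  have hb : ∀ i, 0 < b i := fun i => mul_pos hC (hlamσ i)
  have hAB : (Uσ * Matrix.diagonal (fun i => (b i : ℂ)) * Uσᴴ
            - Uρ * Matrix.diagonal (fun i => (lamρ i : ℂ)) * Uρᴴ).PosSemidef := by
    have : Matrix.diagonal (fun i => (b i : ℂ)) = (C:ℂ) • Matrix.diagonal (fun i => (lamσ i : ℂ)) := by
      ext i j
      by_cases h : i = j <;>
        simp [Matrix.diagonal_apply, h, hbdef, Matrix.smul_apply, Complex.ofReal_mul]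
    rw [this, Matrix.mul_smul, Matrix.smul_mul, ← hspecσ, ← hspecρ]
    exact hle
  -- pointwise inequality
  have hpt : ∀ t ∈ Set.Icc (0:ℝ) 1,
      (Matrix.trace (Xᴴ * matRpow Uρ lamρ t * X * matRpow Uρ lamρ (1 - t))).re
        ≤ C * (Matrix.trace (Xᴴ * matRpow Uσ lamσ t * X * matRpow Uσ lamσ (1 - t))).re := by
    intro t ht
    obtain ⟨ht0, ht1⟩ := ht
    have ht0' : (0:ℝ) ≤ 1 - t := by linarith
    have ht1' : 1 - t ≤ 1 := by linarith
    set At := matRpow Uρ lamρ t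
    set A1t := matRpow Uρ lamρ (1-t)
    set Bt := matRpow Uσ lamσ t
    set B1t := matRpow Uσ lamσ (1-t)
    set Mt := matRpow Uσ b t with hMtdef
    set M1t := matRpow Uσ b (1-t) with hM1tdef
    have hLH1 : (Mt - At).PosSemidef := LH Uρ Uσ lamρ b hUρ hUσ hlamρ hb hAB ht0 ht1
    have hLH2 : (M1t - A1t).PosSemidef := LH Uρ Uσ lamρ b hUρ hUσ hlamρ hb hAB ht0' ht1'
    have hA1t : A1t.PosSemidef := matRpow_posSemidef _ _ hlamρ _
    have hMt : Mt.PosSemidef := matRpow_posSemidef _ _ hb _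
    have step1 : (Xᴴ * At * X * A1t).trace ≤ (Xᴴ * Mt * X * A1t).trace := by
      rw [← sub_nonneg, ← Matrix.trace_sub]
      have : Xᴴ * Mt * X * A1t - Xᴴ * At * X * A1t = Xᴴ * (Mt - At) * X * A1t := by
        noncomm_ring
      rw [this]
      exact trace_key hLH1 hA1t
    have step2 : (Xᴴ * Mt * X * A1t).trace ≤ (Xᴴ * Mt * X * M1t).trace := by
      rw [← sub_nonneg, ← Matrix.trace_sub]
      have : Xᴴ * Mt * X * M1t - Xᴴ * Mt * X * A1t = Xᴴ * Mt * X * (M1t - A1t) := by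
        noncomm_ring
      rw [this]
      exact trace_key hMt hLH2
    have step3 : (Xᴴ * Mt * X * M1t).trace = (C:ℂ) * (Xᴴ * Bt * X * B1t).trace := by
      have e1 : Mt = ((C ^ t : ℝ) : ℂ) • Bt :=
        matRpow_smul Uσ lamσ (fun i => (hlamσ i).le) hC.le t
      have e2 : M1t = ((C ^ (1-t) : ℝ) : ℂ) • B1t :=
        matRpow_smul Uσ lamσ (fun i => (hlamσ i).le) hC.le (1-t)
      rw [e1, e2]
      simp only [Matrix.mul_smul, Matrix.smul_mul, smul_smul, Matrix.trace_smul, smul_eq_mul]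
      congr 1
      rw [← Complex.ofReal_mul, ← Real.rpow_add hC]
      norm_num
    have hle' : (Xᴴ * At * X * A1t).trace ≤ (C:ℂ) * (Xᴴ * Bt * X * B1t).trace := by
      rw [← step3]; exact le_trans step1 step2
    have := (Complex.le_def.mp hle').1
    simpa [Complex.re_ofReal_mul] using this
  -- integrate
  have hcρ := cont_integrand Uρ lamρ hlamρ X
  have hcσ := cont_integrand Uσ lamσ hlamσ X
  rw [← intervalIntegral.integral_const_mul]
  exact intervalIntegral.integral_mono_on (by norm_num)
    (hcρ.intervalIntegrable 0 1) ((continuous_const.mul hcσ).intervalIntegrable 0 1)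
    (by intro t ht; exact hpt t ht)
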